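/- For τ, σ ∈ ∏_p ℤ_p with τ ≠ σ, the subrings R_τ and R_σ of ℚ[x] are distinct (as subsets of ℚ[x]). -/

import Mathlib

open Polynomial

/-- The subset `R_τ` of `ℚ[X]`: quotients `h/n` with `h ∈ ℤ[X]`, `n` a positive integer,
such that for every prime `p` the evaluation `h(τ_p)` in the `p`-adic integers is divisible
by `p ^ v_p(n)`. -/
def RtauSet (τ : ∀ p : {p : ℕ // p.Prime}, @PadicInt p.1 ⟨p.2⟩) : Set (Polynomial ℚ) :=
  {f | ∃ (h : Polynomial ℤ) (n : ℕ), n ≠ 0 ∧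
    Polynomial.C (n : ℚ) * f = h.map (algebraMap ℤ ℚ) ∧
    ∀ p : {p : ℕ // p.Prime},
      letI : Fact p.1.Prime := ⟨p.2⟩
      ((p.1 : @PadicInt p.1 ⟨p.2⟩) ^ (n.factorization p.1)) ∣ Polynomial.aeval (τ p) h}

/-- Distinct parameters `τ ≠ σ` yield distinct subrings `R_τ ≠ R_σ` of `ℚ[X]`. -/
theorem stmt_7 (τ σ : ∀ p : {p : ℕ // p.Prime}, @PadicInt p.1 ⟨p.2⟩) (hne : τ ≠ σ) :
    RtauSet τ ≠ RtauSet σ := by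
  obtain ⟨p, hp⟩ := Function.ne_iff.mp hne
  haveI : Fact p.1.Prime := ⟨p.2⟩
  have hp1 : (1 : ℝ) < (p.1 : ℝ) := by exact_mod_cast p.2.one_lt
  have hp0 : (0 : ℝ) < (p.1 : ℝ) := lt_trans one_pos hp1
  set d : ℤ_[p.1] := τ p - σ p with hd_def
  have hd : d ≠ 0 := sub_ne_zero.mpr hp
  set m : ℕ := d.valuation with hm_def
  have hval : (d.valuation : ℤ) = (m : ℤ) := rfl
  have hnd : ‖d‖ = (p.1 : ℝ) ^ (-(m : ℤ)) := by
    rw [PadicInt.norm_eq_zpow_neg_valuation hd]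
  set a : ℕ := (τ p).appr (m + 1) with ha_def
  have happr : ((p.1 : ℤ_[p.1])) ^ (m + 1) ∣ (τ p - (a : ℤ_[p.1])) := by
    rw [← Ideal.mem_span_singleton]
    exact PadicInt.appr_spec (m + 1) (τ p)
  have hanorm : ‖τ p - (a : ℤ_[p.1])‖ ≤ (p.1 : ℝ) ^ (-(m + 1 : ℤ)) := by
    rw [show (-(m+1 : ℤ)) = (-(m+1 : ℕ) : ℤ) by push_cast; ring]
    rw [PadicInt.norm_le_pow_iff_mem_span_pow]
    exact PadicInt.appr_spec (m + 1) (τ p)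
  -- the witness polynomial
  set f : Polynomial ℚ := C (((p.1 : ℚ)) ^ (m + 1))⁻¹ * (X - C (a : ℚ)) with hf_def
  have hpQ : ((p.1 : ℚ)) ^ (m + 1) ≠ 0 :=
    pow_ne_zero _ (Nat.cast_ne_zero.mpr p.2.ne_zero)
  -- f ∈ RtauSet τ
  have hmem : f ∈ RtauSet τ := by
    refine ⟨X - C (a : ℤ), p.1 ^ (m + 1), pow_ne_zero _ p.2.ne_zero, ?_, ?_⟩
    · rw [hf_def, ← mul_assoc]
      push_cast
      rw [← C_mul, mul_inv_cancel₀ hpQ, C_1, one_mul]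
      simp [Polynomial.map_sub]
    · intro q
      rw [Nat.Prime.factorization_pow p.2]
      rcases eq_or_ne q p with rfl | hq
      · rw [Finsupp.single_eq_same]
        simpa using happr
      · rw [Finsupp.single_eq_of_ne (fun h => hq (Subtype.ext h))]
        simp
  -- f ∉ RtauSet σ
  have hnmem : f ∉ RtauSet σ := by
    rintro ⟨h', n', hn0, heq, hdvd⟩
    have hdvdp := hdvd p
    set v : ℕ := n'.factorization p.1 with hv_def
    -- norm of evaluation
    have key : ((n' : ℚ_[p.1])) * (((p.1 : ℚ_[p.1]) ^ (m + 1))⁻¹ * ((σ p : ℚ_[p.1]) - (a : ℚ_[p.1])))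
        = ((Polynomial.aeval (σ p) h' : ℤ_[p.1]) : ℚ_[p.1]) := by
      have h1 := congrArg (Polynomial.aeval ((σ p : ℚ_[p.1]))) heq
      rw [Polynomial.aeval_map_algebraMap] at h1
      have h2 : ((Polynomial.aeval (σ p) h' : ℤ_[p.1]) : ℚ_[p.1])
          = Polynomial.aeval ((σ p : ℚ_[p.1])) h' :=
        (Polynomial.aeval_algHom_apply (PadicInt.Coe.ringHom.toIntAlgHom) (σ p) h').symm
      rw [h2, ← h1]
      simp [hf_def, mul_assoc]
    -- compute norm of sigma p - a
    have hds : (σ p : ℤ_[p.1]) - (a : ℤ_[p.1]) = -d + (τ p - (a : ℤ_[p.1])) := by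
      rw [hd_def]; ring
    have hlt : (p.1 : ℝ) ^ (-(m + 1 : ℤ)) < (p.1 : ℝ) ^ (-(m : ℤ)) := by
      apply zpow_lt_zpow_right₀ hp1; omega
    have hsnorm : ‖(σ p : ℤ_[p.1]) - (a : ℤ_[p.1])‖ = (p.1 : ℝ) ^ (-(m : ℤ)) := by
      rw [hds, PadicInt.norm_add_eq_max_of_ne]
      · rw [norm_neg, hnd]
        exact max_eq_left (le_of_lt (lt_of_le_of_lt hanorm hlt))
      · rw [norm_neg, hnd]
        exact fun h => absurd (h ▸ hanorm) (not_le.mpr hlt)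
    have hn'norm : ‖(n' : ℚ_[p.1])‖ = (p.1 : ℝ) ^ (-(v : ℤ)) := by
      rw [Padic.norm_eq_zpow_neg_valuation (by exact_mod_cast hn0 : ((n' : ℚ_[p.1])) ≠ 0),
        Padic.valuation_natCast, hv_def, Nat.factorization_def _ p.2]
    have hEnorm : ‖(Polynomial.aeval (σ p) h' : ℤ_[p.1])‖
        = (p.1 : ℝ) ^ (-(v : ℤ)) * (p.1 : ℝ) ^ (1 : ℤ) := by
      rw [PadicInt.norm_def, ← key]
      rw [norm_mul, norm_mul, norm_inv, norm_pow, Padic.norm_p, hn'norm]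
      have : ‖((σ p : ℚ_[p.1]) - (a : ℚ_[p.1]))‖ = ‖(σ p : ℤ_[p.1]) - (a : ℤ_[p.1])‖ := by
        rw [PadicInt.norm_def]; push_cast; ring_nf
      rw [this, hsnorm, ← inv_pow, inv_inv, ← zpow_natCast ((p.1 : ℝ)), ← zpow_add₀ (ne_of_gt hp0)]
      congr 1
      push_cast
      ring
    have hle : ‖(Polynomial.aeval (σ p) h' : ℤ_[p.1])‖ ≤ (p.1 : ℝ) ^ (-(v : ℤ)) := by
      rw [show (-(v : ℤ)) = (-(v : ℕ) : ℤ) by push_cast; ring]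
      rw [PadicInt.norm_le_pow_iff_mem_span_pow, Ideal.mem_span_singleton]
      exact hdvdp
    rw [hEnorm] at hle
    have : (p.1 : ℝ) ^ (-(v : ℤ)) < (p.1 : ℝ) ^ (-(v : ℤ)) * (p.1 : ℝ) ^ (1 : ℤ) := by
      nth_rewrite 1 [← mul_one ((p.1 : ℝ) ^ (-(v : ℤ)))]
      apply mul_lt_mul_of_pos_left _ (zpow_pos hp0 _)
      simpa using hp1
    exact absurd hle (not_le.mpr this)
  intro hEq
  rw [hEq] at hmem
  exact hnmem hmem
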